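/- Let K be a field and I a T-ideal of 𝔽. Then the set of all u ∈ KF that are identities of every representation (V,G) belonging to ηΣ equals the verbal ideal I_Σ(KF), i.e., the two-sided ideal of KF generated by all elements μ(f) with f ∈ I and μ : 𝔽 → KF a K-algebra homomorphism. -/

import Mathlib

/-- for a T-ideal `I` of `𝔽 = FreeAlgebra K ℕ` over a field `K`, the set of
elements `u ∈ KF` that are identities of every representation in `ηΣ` equals the verbal
ideal `I_Σ(KF)`, the two-sided ideal of `KF` generated by all `μ f` with `f ∈ I` and
`μ : 𝔽 →ₐ[K] KF`. -/
theorem identities_of_etaSigma_eq_verbal_ideal (K : Type) [Field K]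
    (I : Submodule K (FreeAlgebra K ℕ))
    (hI2 : ∀ r : FreeAlgebra K ℕ, ∀ x ∈ I, r * x ∈ I ∧ x * r ∈ I)
    (hIT : ∀ φ : FreeAlgebra K ℕ →ₐ[K] FreeAlgebra K ℕ, ∀ x ∈ I, φ x ∈ I) :
    {u : MonoidAlgebra K (FreeGroup ℕ) |
      ∀ (G : Type) [Group G] (V : Type) [AddCommGroup V] [Module (MonoidAlgebra K G) V],
        (∀ f ∈ I, ∀ μ : FreeAlgebra K ℕ →ₐ[K] MonoidAlgebra K G, ∀ v : V, μ f • v = 0) →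
        ∀ β : FreeGroup ℕ →* G, ∀ v : V, (MonoidAlgebra.mapDomainAlgHom K K β u) • v = 0} =
    (Submodule.span K
      {x : MonoidAlgebra K (FreeGroup ℕ) |
        ∃ f ∈ I, ∃ μ : FreeAlgebra K ℕ →ₐ[K] MonoidAlgebra K (FreeGroup ℕ),
        ∃ a b : MonoidAlgebra K (FreeGroup ℕ), x = a * μ f * b} :
      Set (MonoidAlgebra K (FreeGroup ℕ))) := by
  set R := MonoidAlgebra K (FreeGroup ℕ) with hR
  set S : Set R := {x : R |
        ∃ f ∈ I, ∃ μ : FreeAlgebra K ℕ →ₐ[K] R,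
        ∃ a b : R, x = a * μ f * b} with hS
  ext u
  constructor
  · -- forward: identities lie in the verbal ideal
    intro hu
    -- consider the quotient representation R / (span R S)
    set J : Submodule R R := Submodule.span R S with hJ
    have hmem : ∀ f ∈ I, ∀ μ : FreeAlgebra K ℕ →ₐ[K] R, ∀ x : R, μ f * x ∈ J := by
      intro f hf μ x
      exact Submodule.subset_span ⟨f, hf, μ, 1, x, by rw [one_mul]⟩
    have hrep : ∀ f ∈ I, ∀ μ : FreeAlgebra K ℕ →ₐ[K] R, ∀ v : R ⧸ J, μ f • v = 0 := by
      intro f hf μ v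
      obtain ⟨x, rfl⟩ := Submodule.Quotient.mk_surjective J v
      rw [← Submodule.Quotient.mk_smul, smul_eq_mul]
      exact (Submodule.Quotient.mk_eq_zero J).2 (hmem f hf μ x)
    have h1 := hu (FreeGroup ℕ) (R ⧸ J) hrep (MonoidHom.id _) (Submodule.Quotient.mk 1)
    have hid : (MonoidAlgebra.mapDomainAlgHom K K (MonoidHom.id (FreeGroup ℕ))) u = u := by
      rw [MonoidAlgebra.mapDomainAlgHom_id]
      rfl
    rw [hid, ← Submodule.Quotient.mk_smul, smul_eq_mul, mul_one,
      Submodule.Quotient.mk_eq_zero] at h1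
    -- now u ∈ span R S; show span R S ≤ span K S since S is closed under R-multiplication
    refine Submodule.span_induction (p := fun x _ => x ∈ Submodule.span K S)
      (fun x hx => Submodule.subset_span hx) (Submodule.zero_mem _)
      (fun x y _ _ hx hy => Submodule.add_mem _ hx hy) ?_ h1
    intro r x hxJ hx
    rw [smul_eq_mul]
    -- multiplication on the left by r is K-linear and maps S into S
    have : Submodule.map (LinearMap.mulLeft K r) (Submodule.span K S) ≤ Submodule.span K S := by
      rw [Submodule.map_span, Submodule.span_le]
      rintro _ ⟨y, ⟨f, hf, μ, a, b, rfl⟩, rfl⟩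
      exact Submodule.subset_span ⟨f, hf, μ, r * a, b, by
        simp [LinearMap.mulLeft_apply, mul_assoc]⟩
    exact this ⟨x, hx, rfl⟩
  · -- reverse: verbal ideal elements are identities
    intro hu
    intro G _ V _ _ hV β v
    refine Submodule.span_induction
      (p := fun x _ => (MonoidAlgebra.mapDomainAlgHom K K β x) • v = 0) ?_ ?_ ?_ ?_ hu
    · rintro x ⟨f, hf, μ, a, b, rfl⟩
      rw [map_mul, map_mul, mul_smul, mul_smul,
        show (MonoidAlgebra.mapDomainAlgHom K K β) (μ f)
          = ((MonoidAlgebra.mapDomainAlgHom K K β).comp μ) f from rfl,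
        hV f hf ((MonoidAlgebra.mapDomainAlgHom K K β).comp μ), smul_zero]
    · simp
    · intro x y _ _ hx hy
      rw [map_add, add_smul, hx, hy, add_zero]
    · intro c x _ hx
      rw [map_smul, ← smul_one_smul (MonoidAlgebra K G) c, smul_eq_mul, mul_smul, hx, smul_zero]
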